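/- There exists a constant b (depending only on q) such that for all real x ≥ 2, ∑_{P prime in A, |P| ≤ x} 1/|P| = log log x + b + O(1/log x), where log denotes the natural logarithm and the implied constant depends only on q. -/

import Mathlib

set_option linter.unusedSectionVars false
set_option maxHeartbeats 1000000


open Polynomial Finset UniqueFactorizationMonoid
open scoped Classical

noncomputable section

namespace GaoZhao

variable {F : Type} [Field F] [Fintype F] [DecidableEq F]

/-- The monic polynomial `T^n + c_{n-1}T^{n-1} + ⋯ + c_0`; as `c` ranges over `Fin n → F`
these give exactly the monic polynomials of degree `n` in `A = F_q[T]`. -/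
def monicOf {n : ℕ} (c : Fin n → F) : F[X] :=
  X ^ n + ∑ i : Fin n, Polynomial.C (c i) * X ^ (i : ℕ)

/-- The quadratic residue symbol `(f/P)` for a prime `P` of `A = F_q[T]`:
`0` if `P ∣ f`, `1` if `f` is a nonzero square modulo `P`, and `-1` otherwise. -/
def legSym (P f : F[X]) : ℤ :=
  if P ∣ f then 0 else if ∃ r : F[X], P ∣ (r ^ 2 - f) then 1 else -1

/-- `quadChar D f = χ_D(f) = (D/f)`, the quadratic residue symbol extended
multiplicatively in the lower entry (over the monic irreducible factors of `f`,
with multiplicity). -/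
def quadChar (D f : F[X]) : ℤ :=
  ((normalizedFactors f).map fun P => legSym P D).prod

/-- The norm `|f| = q^{deg f}` for `f ≠ 0`, and `|0| = 0`. -/
def pnorm (f : F[X]) : ℝ :=
  if f = 0 then 0 else (Fintype.card F : ℝ) ^ f.natDegree

/-- `X = q^{2g+1}`. -/
def Xcard (F : Type) [Fintype F] (g : ℕ) : ℝ := (Fintype.card F : ℝ) ^ (2 * g + 1)

/-- `ζ_A(2) = (1 - 1/q)⁻¹`. -/
def zq2 (F : Type) [Fintype F] : ℝ := (1 - 1 / (Fintype.card F : ℝ))⁻¹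

/-- Sum of a weight over all monic polynomials of degree `n`. -/
def sumMonic {R : Type*} [AddCommMonoid R] (n : ℕ) (w : F[X] → R) : R :=
  ∑ c : Fin n → F, w (monicOf c)

/-- Sum of a weight over the set `H_{2g+1,q}` of monic squarefree polynomials of
degree `2g+1`. -/
def sumH {R : Type*} [AddCommMonoid R] (g : ℕ) (w : F[X] → R) : R :=
  sumMonic (2 * g + 1) fun D => if Squarefree D then w D else 0

/-- Sum of a weight over the set `P_{2g+1,q}` of monic irreducible polynomials of
degree `2g+1`. -/
def sumP {R : Type*} [AddCommMonoid R] (g : ℕ) (w : F[X] → R) : R :=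
  sumMonic (2 * g + 1) fun P => if Irreducible P then w P else 0

/-- `L(1/2, χ_D) = 𝓛(q^{-1/2}, χ_D)`, where `𝓛(u,χ_D) = ∑_{f monic} χ_D(f) u^{deg f}`
is a polynomial in `u` of degree at most `2g`, namely
`∑_{n=0}^{2g} (∑_{f ∈ M_n} χ_D(f)) uⁿ`. -/
def Lhalf (g : ℕ) (D : F[X]) : ℝ :=
  ∑ n ∈ range (2 * g + 1),
    (sumMonic n fun f => (quadChar D f : ℝ)) / Real.sqrt ((Fintype.card F : ℝ) ^ n)

/-- `𝓛(u, χ_D) = ∑_{n=0}^{2g} (∑_{f ∈ M_n} χ_D(f)) uⁿ`, as a function of a complex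
variable `u`. -/
def Lc (g : ℕ) (D : F[X]) (u : ℂ) : ℂ :=
  ∑ n ∈ range (2 * g + 1), (sumMonic n fun f => (quadChar D f : ℂ)) * u ^ n

/-- `d_A(f)`: the number of monic divisors of `f`. -/
def dA (f : F[X]) : ℕ := Nat.card {d : F[X] // d.Monic ∧ d ∣ f}

/-- `d_{A,k}(f)`: the number of ways of writing `f` as an ordered product of `k`
monic polynomials. -/
def dAk (k : ℕ) (f : F[X]) : ℕ :=
  Nat.card {v : Fin k → F[X] // (∀ i, (v i).Monic) ∧ ∏ i, v i = f}

/-- The set of monic irreducible divisors of `f`. -/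
def primeDivisors (f : F[X]) : Finset F[X] := (normalizedFactors f).toFinset

/-- `f = □`: `f` is a perfect square in `A`. -/
def IsSq (f : F[X]) : Prop := ∃ r : F[X], f = r ^ 2


lemma degree_sum_lt {n : ℕ} (c : Fin n → F) :
    (∑ i : Fin n, Polynomial.C (c i) * X ^ (i : ℕ)).degree < ((n : ℕ) : WithBot ℕ) := by
  apply lt_of_le_of_lt (Polynomial.degree_sum_le _ _)
  rw [Finset.sup_lt_iff (by exact_mod_cast WithBot.bot_lt_coe n)]
  intro i _
  exact lt_of_le_of_lt (Polynomial.degree_C_mul_X_pow_le _ _) (by exact_mod_cast i.2)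

lemma monic_monicOf {n : ℕ} (c : Fin n → F) : (monicOf c).Monic :=
  Polynomial.monic_X_pow_add (degree_sum_lt c)

lemma natDegree_monicOf {n : ℕ} (c : Fin n → F) : (monicOf c).natDegree = n := by
  have h : (monicOf c).degree = (n : ℕ) := by
    rw [monicOf, Polynomial.degree_add_eq_left_of_degree_lt, Polynomial.degree_X_pow]
    rw [Polynomial.degree_X_pow]; exact degree_sum_lt c
  exact Polynomial.natDegree_eq_of_degree_eq_some h

lemma coeff_monicOf {n : ℕ} (c : Fin n → F) (i : Fin n) : (monicOf c).coeff i = c i := by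
  rw [monicOf, Polynomial.coeff_add, Polynomial.coeff_X_pow, if_neg (Nat.ne_of_lt i.2),
    Polynomial.finset_sum_coeff, zero_add]
  simp only [Polynomial.coeff_C_mul, Polynomial.coeff_X_pow, mul_ite, mul_one, mul_zero]
  rw [Finset.sum_eq_single i (fun b _ hb => if_neg (fun h => hb (Fin.ext h.symm)))
    (fun h => absurd (Finset.mem_univ i) h)]
  exact if_pos rfl

lemma monicOf_injective {n : ℕ} : Function.Injective (monicOf (F := F) (n := n)) := by
  intro a b h
  funext i
  rw [← coeff_monicOf a i, ← coeff_monicOf b i, h]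

lemma exists_monicOf {n : ℕ} {f : F[X]} (hm : f.Monic) (hd : f.natDegree = n) :
    ∃ c : Fin n → F, monicOf c = f := by
  refine ⟨fun i => f.coeff i, ?_⟩
  ext k
  rw [monicOf, Polynomial.coeff_add, Polynomial.finset_sum_coeff, Polynomial.coeff_X_pow]
  simp only [Polynomial.coeff_C_mul, Polynomial.coeff_X_pow, mul_ite, mul_one, mul_zero]
  rcases lt_trichotomy k n with h | h | h
  · rw [if_neg h.ne, zero_add,
      Finset.sum_eq_single (⟨k, h⟩ : Fin n)
        (fun b _ hb => if_neg (fun hh => hb (Fin.ext hh.symm)))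
        (fun hh => absurd (Finset.mem_univ _) hh)]
    exact if_pos rfl
  · subst h
    rw [if_pos rfl, Finset.sum_eq_zero (fun b _ => if_neg (Nat.ne_of_gt b.2)), add_zero]
    exact (hd ▸ hm.coeff_natDegree : f.coeff k = 1).symm
  · rw [if_neg h.ne', Finset.sum_eq_zero (fun b _ => if_neg (fun hh => absurd (hh ▸ h) (not_lt.mpr (le_of_lt b.2)))), add_zero]
    exact (Polynomial.coeff_eq_zero_of_natDegree_lt (hd ▸ h)).symm

variable (F) in
def picount (n : ℕ) : ℕ :=
  (Finset.univ.filter fun c : Fin n → F => Irreducible (monicOf c)).card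

variable (F) in
def Pset (d : ℕ) : Finset F[X] :=
  (Finset.univ.image (monicOf (F := F) (n := d))).filter Irreducible

lemma mem_Pset {d : ℕ} {f : F[X]} :
    f ∈ Pset F d ↔ (f.Monic ∧ f.natDegree = d) ∧ Irreducible f := by
  rw [Pset, Finset.mem_filter, Finset.mem_image]
  constructor
  · rintro ⟨⟨c, -, rfl⟩, h2⟩
    exact ⟨⟨monic_monicOf c, natDegree_monicOf c⟩, h2⟩
  · rintro ⟨⟨h1, h2⟩, h3⟩
    obtain ⟨c, hc⟩ := exists_monicOf h1 h2
    exact ⟨⟨c, Finset.mem_univ c, hc⟩, h3⟩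

lemma card_Pset (d : ℕ) : (Pset F d).card = picount F d := by
  rw [Pset, Finset.filter_image, Finset.card_image_of_injective _ monicOf_injective, picount]

lemma picount_zero : picount F 0 = 0 := by
  rw [picount, Finset.card_eq_zero, Finset.filter_eq_empty_iff]
  intro c _
  have : monicOf c = 1 := by simp [monicOf]
  rw [this]
  exact not_irreducible_one

lemma picount_one_le : picount F 1 ≤ Fintype.card F := by
  calc picount F 1 ≤ (Finset.univ : Finset (Fin 1 → F)).card := Finset.card_filter_le _ _
  _ = Fintype.card F := by simp

lemma nat_sub_one_dvd {q : ℕ} (hq : 2 ≤ q) : ∀ n d : ℕ, 0 < d → q ^ d - 1 ∣ q ^ n - 1 → d ∣ n := by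
  intro n
  induction n using Nat.strong_induction_on with
  | _ n ih =>
    intro d hd hdvd
    rcases lt_or_ge n d with h | h
    · have hlt : q ^ n - 1 < q ^ d - 1 := by
        have := Nat.pow_lt_pow_right (by omega : 1 < q) h
        have := Nat.one_le_pow n q (by omega)
        omega
      have h0 : q ^ n - 1 = 0 := Nat.eq_zero_of_dvd_of_lt hdvd hlt
      have hn0 : n = 0 := by
        by_contra hc
        have := Nat.le_self_pow hc q
        omega
      simp [hn0]
    · have e1 : 1 ≤ q ^ (n - d) := Nat.one_le_pow _ _ (by omega)
      have e2 : 1 ≤ q ^ d := Nat.one_le_pow _ _ (by omega)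
      have e3 : q ^ (n - d) * q ^ d = q ^ n := by rw [← pow_add]; congr 1; omega
      have h4 : q ^ (n - d) * (q ^ d - 1) + q ^ (n - d) = q ^ (n - d) * q ^ d := by
        rw [Nat.mul_sub]
        have : q ^ (n - d) * 1 ≤ q ^ (n - d) * q ^ d := Nat.mul_le_mul_left _ e2
        omega
      have h1 : q ^ n - 1 = q ^ (n - d) * (q ^ d - 1) + (q ^ (n - d) - 1) := by omega
      have key : q ^ d - 1 ∣ q ^ (n - d) - 1 := by
        rw [h1] at hdvd
        exact (Nat.dvd_add_right ⟨q ^ (n - d), mul_comm _ _⟩).mp hdvd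
      have := ih (n - d) (Nat.sub_lt (by omega) hd) d hd key
      have : d ∣ (n - d) + d := Nat.dvd_add this dvd_rfl
      rwa [Nat.sub_add_cancel h] at this

lemma geom_bound {q : ℕ} (hq : 2 ≤ q) (m : ℕ) : ∑ d ∈ Finset.range (m + 1), q ^ d ≤ 2 * q ^ m := by
  induction m with
  | zero => simp
  | succ m ih =>
    rw [Finset.sum_range_succ]
    have : 2 * q ^ m ≤ q ^ (m + 1) := by
      rw [pow_succ, mul_comm]
      exact Nat.mul_le_mul_left _ hq
    omega


lemma minpoly_eq {P : F[X]} (hP : Irreducible P) (hm : P.Monic) :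
    minpoly F (AdjoinRoot.root P) = P := by
  haveI : Fact (Irreducible P) := ⟨hP⟩
  rw [AdjoinRoot.minpoly_root hP.ne_zero, hm.leadingCoeff, inv_one, map_one, mul_one]

lemma card_adjoinRoot {P : F[X]} (hP : Irreducible P) [Fintype (AdjoinRoot P)] :
    Fintype.card (AdjoinRoot P) = Fintype.card F ^ P.natDegree := by
  haveI : Fact (Irreducible P) := ⟨hP⟩
  let pb := AdjoinRoot.powerBasis hP.ne_zero
  rw [Module.card_fintype pb.basis, Fintype.card_fin, AdjoinRoot.powerBasis_dim]

lemma dvd_S_of_deg_dvd {n : ℕ} {P : F[X]} (hP : Irreducible P) (hm : P.Monic)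
    (hdvd : P.natDegree ∣ n) :
    P ∣ X ^ Fintype.card F ^ n - X := by
  haveI : Fact (Irreducible P) := ⟨hP⟩
  let pb := AdjoinRoot.powerBasis hP.ne_zero
  haveI : Fintype (AdjoinRoot P) := Module.fintypeOfFintype pb.basis
  have hcard := card_adjoinRoot hP
  obtain ⟨k, hk⟩ := hdvd
  have ht : (AdjoinRoot.root P) ^ Fintype.card F ^ n = AdjoinRoot.root P := by
    rw [hk, pow_mul, ← hcard]
    exact FiniteField.pow_card_pow k _
  have hz : Polynomial.aeval (AdjoinRoot.root P) (X ^ Fintype.card F ^ n - X : F[X]) = 0 := by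
    rw [map_sub, map_pow, Polynomial.aeval_X, ht, sub_self]
  exact minpoly_eq hP hm ▸ minpoly.dvd F _ hz

lemma deg_dvd_of_dvd_S {n : ℕ} {P : F[X]} (hP : Irreducible P) (hm : P.Monic)
    (hdvd : P ∣ X ^ Fintype.card F ^ n - X) :
    P.natDegree ∣ n := by
  haveI : Fact (Irreducible P) := ⟨hP⟩
  have hq : 1 < Fintype.card F := Fintype.one_lt_card
  let pb := AdjoinRoot.powerBasis hP.ne_zero
  haveI : Fintype (AdjoinRoot P) := Module.fintypeOfFintype pb.basis
  have hcard : Fintype.card (AdjoinRoot P) = Fintype.card F ^ P.natDegree := card_adjoinRoot hP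
  haveI hpp : Fact (ringChar F).Prime := ⟨CharP.char_is_prime F (ringChar F)⟩
  obtain ⟨m, -, hqp⟩ := FiniteField.card F (ringChar F)
  haveI : CharP (AdjoinRoot P) (ringChar F) := charP_of_injective_algebraMap (algebraMap F (AdjoinRoot P)).injective (ringChar F)
  -- the root satisfies x ^ q ^ n = x
  have hz : Polynomial.aeval (AdjoinRoot.root P) (X ^ Fintype.card F ^ n - X : F[X]) = 0 := by
    obtain ⟨g, hg⟩ := hdvd
    have h0 : Polynomial.aeval (AdjoinRoot.root P) P = 0 := by
      have := minpoly.aeval F (AdjoinRoot.root P)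
      rwa [minpoly_eq hP hm] at this
    rw [hg, map_mul, h0, zero_mul]
  have hroot : (AdjoinRoot.root P) ^ Fintype.card F ^ n = AdjoinRoot.root P := by
    rw [map_sub, map_pow, Polynomial.aeval_X] at hz
    exact sub_eq_zero.mp hz
  -- all elements satisfy x ^ q ^ n = x
  have hqn : Fintype.card F ^ n = ringChar F ^ ((m : ℕ) * n) := by rw [hqp, ← pow_mul]
  have hall : ∀ x : AdjoinRoot P, x ^ Fintype.card F ^ n = x := by
    let S : Subalgebra F (AdjoinRoot P) :=
    { carrier := {x : AdjoinRoot P | x ^ Fintype.card F ^ n = x}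
      mul_mem' := by
        intro a b ha hb
        simp only [Set.mem_setOf_eq] at *
        rw [mul_pow, ha, hb]
      one_mem' := by simp
      add_mem' := by
        intro a b ha hb
        simp only [Set.mem_setOf_eq] at *
        rw [hqn, add_pow_char_pow, ← hqn, ha, hb]
      zero_mem' := by
        simp only [Set.mem_setOf_eq]
        exact zero_pow (pow_ne_zero n (by omega))
      algebraMap_mem' := by
        intro a
        simp only [Set.mem_setOf_eq]
        rw [← map_pow, FiniteField.pow_card_pow]
    }
    intro x
    have htop : Algebra.adjoin F {AdjoinRoot.root P} ≤ S :=
      Algebra.adjoin_le (by simpa [S] using hroot)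
    rw [AdjoinRoot.adjoinRoot_eq_top] at htop
    exact htop (by trivial : x ∈ (⊤ : Subalgebra F (AdjoinRoot P)))
  -- cyclic group argument
  obtain ⟨g, hg⟩ := IsCyclic.exists_generator (α := (AdjoinRoot P)ˣ)
  have horder : orderOf g = Fintype.card F ^ P.natDegree - 1 := by
    rw [orderOf_eq_card_of_forall_mem_zpowers hg, Nat.card_eq_fintype_card,
      Fintype.card_units, hcard]
  have hgpow : g ^ (Fintype.card F ^ n - 1) = 1 := by
    have h1 : (g : AdjoinRoot P) ^ Fintype.card F ^ n = (g : AdjoinRoot P) := hall g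
    have h2 : g ^ Fintype.card F ^ n = g := Units.ext (by rw [Units.val_pow_eq_pow_val]; exact h1)
    have h3 : g ^ (Fintype.card F ^ n - 1) * g = 1 * g := by
      rw [one_mul, ← pow_succ, Nat.sub_add_cancel (Nat.one_le_pow _ _ (by omega)), h2]
    exact mul_right_cancel h3
  have hdvd2 : Fintype.card F ^ P.natDegree - 1 ∣ Fintype.card F ^ n - 1 := horder ▸ orderOf_dvd_of_pow_eq_one hgpow
  exact nat_sub_one_dvd (by omega) n P.natDegree hP.natDegree_pos hdvd2


lemma key_identity (n : ℕ) (hn : n ≠ 0) :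
    Fintype.card F ^ n = ∑ d ∈ n.divisors, d * picount F d := by
  have hq : 1 < Fintype.card F := Fintype.one_lt_card
  set S : F[X] := X ^ Fintype.card F ^ n - X with hSdef
  have hS0 : S ≠ 0 := FiniteField.X_pow_card_pow_sub_X_ne_zero F hn hq
  have hSdeg : S.natDegree = Fintype.card F ^ n :=
    FiniteField.X_pow_card_pow_sub_X_natDegree_eq F hn hq
  have hSm : S.Monic := by
    rw [hSdef, sub_eq_add_neg]
    apply Polynomial.monic_X_pow_add
    rw [Polynomial.degree_neg, Polynomial.degree_X]
    exact_mod_cast Nat.one_lt_pow hn hq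
  have hsep : S.Separable := by
    haveI hpp : Fact (ringChar F).Prime := ⟨CharP.char_is_prime F (ringChar F)⟩
    obtain ⟨m, -, hqp⟩ := FiniteField.card F (ringChar F)
    refine galois_poly_separable (ringChar F) (Fintype.card F ^ n) ?_
    rw [hqp, ← pow_mul]
    exact dvd_pow_self _ (by positivity)
  have hnodup := (squarefree_iff_nodup_normalizedFactors hS0).mp hsep.squarefree
  set B : Finset F[X] := n.divisors.biUnion (Pset F) with hBdef
  have hmem : ∀ Q : F[X], Q ∈ normalizedFactors S ↔ Q ∈ B := by
    intro Q
    constructor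
    · intro hQ
      have hQi := irreducible_of_normalized_factor Q hQ
      have hQd := dvd_of_mem_normalizedFactors hQ
      have hQm : Q.Monic := by
        have h := normalize_normalized_factor Q hQ
        rw [← h]
        exact Polynomial.monic_normalize hQi.ne_zero
      have hdd : Q.natDegree ∣ n := deg_dvd_of_dvd_S hQi hQm hQd
      exact Finset.mem_biUnion.mpr ⟨Q.natDegree, Nat.mem_divisors.mpr ⟨hdd, hn⟩,
        mem_Pset.mpr ⟨⟨hQm, rfl⟩, hQi⟩⟩
    · intro hQ
      obtain ⟨d, hd, hQ'⟩ := Finset.mem_biUnion.mp hQ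
      obtain ⟨⟨hQm, hQdeg⟩, hQi⟩ := mem_Pset.mp hQ'
      have hdvd : Q ∣ S := dvd_S_of_deg_dvd hQi hQm (hQdeg ▸ (Nat.mem_divisors.mp hd).1)
      obtain ⟨R, hR, hassoc⟩ := exists_mem_normalizedFactors_of_dvd hS0 hQi hdvd
      have hRm : R.Monic := by
        have h := normalize_normalized_factor R hR
        rw [← h]
        exact Polynomial.monic_normalize (irreducible_of_normalized_factor R hR).ne_zero
      rwa [eq_of_monic_of_associated hQm hRm hassoc]
  have hBmonic : ∀ Q ∈ B, Q.Monic := fun Q hQ => by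
    obtain ⟨d, -, hQ'⟩ := Finset.mem_biUnion.mp hQ
    exact (mem_Pset.mp hQ').1.1
  have hBval : B.val = normalizedFactors S := by
    have h1 : (normalizedFactors S).toFinset = B := Finset.ext fun Q => by
      rw [Multiset.mem_toFinset]; exact hmem Q
    rw [← h1, Multiset.toFinset_val, Multiset.dedup_eq_self.mpr hnodup]
  have hprod : ∏ Q ∈ B, Q = S := by
    refine eq_of_monic_of_associated (Polynomial.monic_prod_of_monic _ _ hBmonic) hSm ?_
    rw [Finset.prod_eq_multiset_prod, Multiset.map_id', hBval]
    exact prod_normalizedFactors hS0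
  have hdegsum : Fintype.card F ^ n = ∑ Q ∈ B, Q.natDegree := by
    rw [← hSdeg, ← hprod, Polynomial.natDegree_prod _ _ (fun Q hQ => (hBmonic Q hQ).ne_zero)]
  rw [hdegsum, hBdef, Finset.sum_biUnion]
  · refine Finset.sum_congr rfl fun d hd => ?_
    rw [← card_Pset d, Finset.card_eq_sum_ones, Finset.mul_sum]
    refine Finset.sum_congr rfl fun Q hQ => ?_
    rw [(mem_Pset.mp hQ).1.2, mul_one]
  · intro a _ b _ hab
    refine Finset.disjoint_left.mpr fun Q hQa hQb => hab ?_
    rw [← (mem_Pset.mp hQa).1.2, ← (mem_Pset.mp hQb).1.2]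

lemma picount_le (n : ℕ) (hn : n ≠ 0) : n * picount F n ≤ Fintype.card F ^ n := by
  rw [key_identity n hn]
  exact Finset.single_le_sum (f := fun d => d * picount F d) (fun _ _ => Nat.zero_le _)
    (Nat.mem_divisors_self n hn)

lemma picount_ge (n : ℕ) (hn : n ≠ 0) :
    Fintype.card F ^ n ≤ n * picount F n + 2 * Fintype.card F ^ (n / 2) := by
  have hq : 2 ≤ Fintype.card F := Fintype.one_lt_card
  have h := key_identity (F := F) n hn
  rw [← Nat.cons_self_properDivisors hn, Finset.sum_cons] at h
  have hb : ∑ d ∈ n.properDivisors, d * picount F d ≤ 2 * Fintype.card F ^ (n / 2) := by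
    calc ∑ d ∈ n.properDivisors, d * picount F d
        ≤ ∑ d ∈ n.properDivisors, Fintype.card F ^ d := by
          refine Finset.sum_le_sum fun d hd => ?_
          obtain ⟨hdvd, hlt⟩ := Nat.mem_properDivisors.mp hd
          have hd0 : d ≠ 0 := by rintro rfl; exact hn (Nat.eq_zero_of_zero_dvd hdvd)
          exact picount_le d hd0
      _ ≤ ∑ d ∈ Finset.range (n / 2 + 1), Fintype.card F ^ d := by
          refine Finset.sum_le_sum_of_subset fun d hd => Finset.mem_range.mpr ?_
          obtain ⟨hdvd, hlt⟩ := Nat.mem_properDivisors.mp hd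
          obtain ⟨k, rfl⟩ := hdvd
          have hk : 2 ≤ k := by
            rcases Nat.lt_or_ge k 2 with h2 | h2
            · interval_cases k <;> omega
            · exact h2
          have : d * 2 ≤ d * k := Nat.mul_le_mul_left _ hk
          have : d ≤ d * k / 2 := (Nat.le_div_iff_mul_le (by norm_num)).mpr this
          omega
      _ ≤ 2 * Fintype.card F ^ (n / 2) := geom_bound hq _
  omega


variable (F) in
def sF : ℝ := Real.sqrt (Fintype.card F)

variable (F) in
def rF : ℝ := (sF F)⁻¹

variable (F) in
def errf (n : ℕ) : ℝ :=
  if n = 0 then 0 else (picount F n : ℝ) / (Fintype.card F : ℝ) ^ n - 1 / n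

lemma one_lt_qR : (1 : ℝ) < (Fintype.card F : ℝ) := by
  exact_mod_cast (Fintype.one_lt_card : 1 < Fintype.card F)

lemma one_lt_sF : 1 < sF F := by
  have h := one_lt_qR (F := F)
  rw [sF, show (1:ℝ) = Real.sqrt 1 by simp]
  exact Real.sqrt_lt_sqrt (by norm_num) h

lemma rF_pos : 0 < rF F := inv_pos.mpr (lt_trans one_pos (one_lt_sF))

lemma rF_lt_one : rF F < 1 := inv_lt_one_of_one_lt₀ one_lt_sF

lemma qR_eq_s_mul_s (n : ℕ) : (Fintype.card F : ℝ) ^ n = sF F ^ n * sF F ^ n := by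
  rw [← mul_pow, ← sq, sF, Real.sq_sqrt (by positivity)]

lemma half_pow_le (n : ℕ) : (Fintype.card F : ℝ) ^ (n / 2 : ℕ) ≤ sF F ^ n := by
  have hq0 : (0:ℝ) ≤ (Fintype.card F : ℝ) := by positivity
  have hs0 : (0:ℝ) ≤ sF F := Real.sqrt_nonneg _
  have h2 : (sF F ^ n) ^ 2 = (Fintype.card F : ℝ) ^ n := by
    rw [← pow_mul, mul_comm, pow_mul, sF, Real.sq_sqrt hq0]
  have hsq : ((Fintype.card F : ℝ) ^ (n / 2 : ℕ)) ^ 2 ≤ (sF F ^ n) ^ 2 := by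
    rw [h2, ← pow_mul]
    exact pow_le_pow_right₀ (le_of_lt one_lt_qR) (by omega)
  exact (pow_le_pow_iff_left₀ (by positivity) (by positivity) (by norm_num)).mp hsq

lemma errf_abs (n : ℕ) : |errf F n| ≤ 2 * rF F ^ n := by
  rcases eq_or_ne n 0 with rfl | hn
  · simp [errf]
  · have hq0 : (0:ℝ) < (Fintype.card F : ℝ) := lt_trans one_pos one_lt_qR
    have hn0 : (0:ℝ) < (n : ℝ) := by exact_mod_cast Nat.pos_of_ne_zero hn
    have hqn : (0:ℝ) < (Fintype.card F : ℝ) ^ n := pow_pos hq0 n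
    have hs0 : (0:ℝ) < sF F := lt_trans one_pos one_lt_sF
    have hrn : (0:ℝ) < rF F ^ n := pow_pos rF_pos n
    have hupper : (picount F n : ℝ) / (Fintype.card F : ℝ) ^ n ≤ 1 / n := by
      rw [div_le_div_iff₀ hqn hn0, one_mul]
      have := picount_le (F := F) n hn
      have : ((n * picount F n : ℕ) : ℝ) ≤ ((Fintype.card F ^ n : ℕ) : ℝ) := by exact_mod_cast this
      push_cast at this
      linarith
    have hlower : 1 / (n:ℝ) ≤ (picount F n : ℝ) / (Fintype.card F : ℝ) ^ n + 2 * rF F ^ n := by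
      have hrw : 2 * rF F ^ n = 2 * sF F ^ n / (Fintype.card F : ℝ) ^ n := by
        rw [qR_eq_s_mul_s, rF, inv_pow]
        field_simp
      rw [hrw, ← add_div, div_le_div_iff₀ hn0 hqn, one_mul]
      have h1 := picount_ge (F := F) n hn
      have h1' : ((Fintype.card F ^ n : ℕ) : ℝ) ≤ ((n * picount F n + 2 * Fintype.card F ^ (n / 2) : ℕ) : ℝ) := by
        exact_mod_cast h1
      push_cast at h1'
      have h2 := half_pow_le (F := F) n
      have hn1 : (1:ℝ) ≤ (n:ℝ) := by exact_mod_cast Nat.one_le_iff_ne_zero.mpr hn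
      have hpi0 : (0:ℝ) ≤ (picount F n : ℝ) := by positivity
      have hsn : (0:ℝ) ≤ sF F ^ n := (pow_pos hs0 n).le
      nlinarith
    rw [abs_le]
    constructor
    · rw [errf, if_neg hn]
      linarith
    · rw [errf, if_neg hn]
      linarith

lemma summable_errf : Summable (errf F) := by
  refine Summable.of_norm_bounded
    ((summable_geometric_of_lt_one (rF_pos (F := F)).le (rF_lt_one (F := F))).mul_left 2) (fun n => ?_)
  rw [Real.norm_eq_abs]
  exact errf_abs n

variable (F) in
def Econst : ℝ := ∑' n, errf F n

lemma tail_bound (N : ℕ) :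
    |∑ n ∈ Finset.range (N + 1), errf F n - Econst F| ≤ 2 * rF F ^ (N + 1) / (1 - rF F) := by
  have hsum := summable_errf (F := F)
  have habs : Summable (fun n => |errf F n|) := by
    refine Summable.of_norm_bounded
      ((summable_geometric_of_lt_one (rF_pos (F := F)).le (rF_lt_one (F := F))).mul_left 2) (fun n => ?_)
    rw [Real.norm_eq_abs, abs_abs]
    exact errf_abs n
  have hkey := Summable.sum_add_tsum_nat_add (N + 1) hsum
  have h1 : ∑ n ∈ Finset.range (N + 1), errf F n - Econst F = -∑' n, errf F (n + (N + 1)) := by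
    rw [Econst, ← hkey]; ring
  rw [h1, abs_neg]
  have hshift : Summable (fun n => |errf F (n + (N + 1))|) :=
    ((summable_nat_add_iff (N + 1)).mpr habs)
  calc |∑' n, errf F (n + (N + 1))| ≤ ∑' n, |errf F (n + (N + 1))| := by
        simpa [Real.norm_eq_abs] using
          norm_tsum_le_tsum_norm (f := fun n => errf F (n + (N + 1))) (by simpa [Real.norm_eq_abs] using hshift)
    _ ≤ ∑' n : ℕ, 2 * rF F ^ (N + 1) * rF F ^ n := by
        refine Summable.tsum_le_tsum (fun n => ?_) hshift ?_
        · calc |errf F (n + (N + 1))| ≤ 2 * rF F ^ (n + (N + 1)) := errf_abs _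
            _ = 2 * rF F ^ (N + 1) * rF F ^ n := by rw [pow_add]; ring
        · exact (summable_geometric_of_lt_one (rF_pos).le (rF_lt_one)).mul_left _
    _ = 2 * rF F ^ (N + 1) / (1 - rF F) := by
        rw [tsum_mul_left, tsum_geometric_of_lt_one (rF_pos).le (rF_lt_one)]
        rw [div_eq_mul_inv]

lemma partial_decomp (N : ℕ) :
    ∑ n ∈ Finset.range (N + 1), (picount F n : ℝ) / (Fintype.card F : ℝ) ^ n
      = (harmonic N : ℝ) + ∑ n ∈ Finset.range (N + 1), errf F n := by
  have h1 : ∀ n : ℕ, (picount F n : ℝ) / (Fintype.card F : ℝ) ^ n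
      = (if n = 0 then (0:ℝ) else 1 / n) + errf F n := by
    intro n
    rcases eq_or_ne n 0 with rfl | hn
    · simp [errf, picount_zero]
    · rw [errf, if_neg hn, if_neg hn]; ring
  rw [Finset.sum_congr rfl (fun n _ => h1 n), Finset.sum_add_distrib]
  congr 1
  rw [Finset.sum_range_succ']
  simp only [eq_self_iff_true, if_true, add_zero]
  have hh : (harmonic N : ℝ) = ∑ i ∈ Finset.range N, ((i:ℝ)+1)⁻¹ := by
    rw [harmonic]
    push_cast
    rfl
  rw [hh]
  refine Finset.sum_congr rfl fun i _ => ?_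
  rw [if_neg (Nat.succ_ne_zero i)]
  push_cast
  rw [one_div]

lemma partial_est (N : ℕ) (hN : 1 ≤ N) :
    |∑ n ∈ Finset.range (N + 1), (picount F n : ℝ) / (Fintype.card F : ℝ) ^ n
      - Real.log N - (Real.eulerMascheroniConstant + Econst F)|
      ≤ 1 / N + 2 * rF F ^ (N + 1) / (1 - rF F) := by
  have hN0 : (0:ℝ) < (N : ℝ) := by exact_mod_cast hN
  have hharm : |(harmonic N : ℝ) - Real.log N - Real.eulerMascheroniConstant| ≤ 1 / N := by
    have h1 := Real.eulerMascheroniSeq_lt_eulerMascheroniConstant N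
    have h2 := Real.eulerMascheroniConstant_lt_eulerMascheroniSeq' N
    rw [Real.eulerMascheroniSeq] at h1
    rw [Real.eulerMascheroniSeq', if_neg (by omega : N ≠ 0)] at h2
    have hlog : Real.log ((N:ℝ) + 1) - Real.log N ≤ 1 / N := by
      rw [← Real.log_div (by positivity) (by positivity)]
      have := Real.log_le_sub_one_of_pos (show (0:ℝ) < ((N:ℝ)+1)/N by positivity)
      have heq : ((N:ℝ) + 1) / N - 1 = 1 / N := by field_simp; ring
      linarith
    rw [abs_le]
    constructor <;> nlinarith
  have htail := tail_bound (F := F) N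
  rw [partial_decomp]
  have : (harmonic N : ℝ) + ∑ n ∈ Finset.range (N + 1), errf F n - Real.log N
      - (Real.eulerMascheroniConstant + Econst F)
      = ((harmonic N : ℝ) - Real.log N - Real.eulerMascheroniConstant)
        + (∑ n ∈ Finset.range (N + 1), errf F n - Econst F) := by ring
  rw [this]
  exact le_trans (abs_add_le _ _) (add_le_add hharm htail)


lemma picount_def (n : ℕ) :
    picount F n = (Finset.univ.filter fun c : Fin n → F => Irreducible (monicOf c)).card := rfl

lemma sF_def : sF F = Real.sqrt (Fintype.card F) := rfl

lemma rF_def : rF F = (sF F)⁻¹ := rfl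

/-- Lemma 2.1, Mertens-type estimate \eqref{lam2p}: there is a
constant `b` with `∑_{|P| ≤ x} 1/|P| = log log x + b + O(1/log x)` for `x ≥ 2`. -/
theorem statement5 (F : Type) [Field F] [Fintype F] [DecidableEq F] :
    ∃ b C : ℝ, 0 < C ∧ ∀ x : ℝ, 2 ≤ x →
      |(∑ n ∈ range (⌊x⌋₊ + 1), sumMonic n fun P : F[X] =>
          if Irreducible P ∧ pnorm P ≤ x then 1 / pnorm P else 0) -
        Real.log (Real.log x) - b| ≤ C / Real.log x := by

  have hq2 : 2 ≤ Fintype.card F := Fintype.one_lt_card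
  have hq1 : (1:ℝ) < (Fintype.card F : ℝ) := by exact_mod_cast hq2
  have hq0 : (0:ℝ) < (Fintype.card F : ℝ) := by linarith
  have hlq : 0 < Real.log (Fintype.card F : ℝ) := Real.log_pos hq1
  have h1r : 0 < 1 - rF F := by linarith [rF_lt_one (F := F)]
  set lq : ℝ := Real.log (Fintype.card F : ℝ) with hlqdef
  set b : ℝ := Real.eulerMascheroniConstant + Econst F - Real.log lq with hbdef
  set C₁ : ℝ := 4 * lq + 4 / (1 - rF F) with hC1def
  set M : ℝ := 1 + |b| + |Real.log (2 * lq)| + |Real.log (Real.log 2)| with hMdef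
  have hM1 : 1 ≤ M := by
    have := abs_nonneg b
    have := abs_nonneg (Real.log (2 * lq))
    have := abs_nonneg (Real.log (Real.log 2))
    rw [hMdef]; linarith
  have hC1pos : 0 < C₁ := by
    have : 0 < 4 / (1 - rF F) := by positivity
    rw [hC1def]; linarith
  set C : ℝ := C₁ + M * (2 * lq) with hCdef
  have hCpos : 0 < C := by
    have : 0 < M * (2 * lq) := by positivity
    rw [hCdef]; linarith
  refine ⟨b, C, hCpos, fun x hx => ?_⟩
  have hx0 : (0:ℝ) < x := by linarith
  have hlx : 0 < Real.log x := Real.log_pos (by linarith)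
  set L : ℝ := Real.log x / lq with hLdef
  have hL0 : 0 ≤ L := by positivity
  set N : ℕ := ⌊L⌋₊ with hNdef
  have hcond : ∀ n : ℕ, ((Fintype.card F : ℝ) ^ n ≤ x ↔ n ≤ N) := by
    intro n
    rw [hNdef, Nat.le_floor_iff hL0, hLdef, le_div_iff₀ hlq]
    rw [← Real.log_pow]
    exact (Real.log_le_log_iff (pow_pos hq0 n) hx0).symm
  -- reduction of the main sum
  have main_sum : (∑ n ∈ range (⌊x⌋₊ + 1), sumMonic n fun P : F[X] =>
          if Irreducible P ∧ pnorm P ≤ x then 1 / pnorm P else 0)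
      = ∑ n ∈ range (N + 1), (picount F n : ℝ) / (Fintype.card F : ℝ) ^ n := by
    have hterm : ∀ n : ℕ, (sumMonic n fun P : F[X] =>
          if Irreducible P ∧ pnorm P ≤ x then 1 / pnorm P else 0)
        = if n ≤ N then (picount F n : ℝ) / (Fintype.card F : ℝ) ^ n else 0 := by
      intro n
      have hp : ∀ c : Fin n → F, pnorm (monicOf c) = (Fintype.card F : ℝ) ^ n := fun c => by
        rw [pnorm, if_neg (monic_monicOf c).ne_zero, natDegree_monicOf]
      rw [sumMonic]
      by_cases hle : (Fintype.card F : ℝ) ^ n ≤ x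
      · rw [if_pos ((hcond n).mp hle)]
        have hterm2 : ∀ c : Fin n → F,
            (if Irreducible (monicOf c) ∧ pnorm (monicOf c) ≤ x then 1 / pnorm (monicOf c) else 0)
            = if Irreducible (monicOf c) then 1 / (Fintype.card F : ℝ) ^ n else 0 := fun c => by
          rw [hp c]
          by_cases h2 : Irreducible (monicOf c) <;> simp [h2, hle]
        rw [Finset.sum_congr rfl fun c _ => hterm2 c, Finset.sum_ite, Finset.sum_const,
          Finset.sum_const_zero, add_zero, nsmul_eq_mul, ← picount_def n, mul_one_div]
      · rw [if_neg (fun hc => hle ((hcond n).mpr hc))]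
        refine Finset.sum_eq_zero fun c _ => if_neg (fun hc => hle (hp c ▸ hc.2))
    rw [Finset.sum_congr rfl fun n _ => hterm n]
    have hNx : N + 1 ≤ ⌊x⌋₊ + 1 := by
      have hqNx : (Fintype.card F : ℝ) ^ N ≤ x := (hcond N).mpr le_rfl
      have ha : (N:ℝ) < 2 ^ N := by exact_mod_cast Nat.lt_two_pow_self (n := N)
      have hb2 : (2:ℝ) ^ N ≤ (Fintype.card F : ℝ) ^ N :=
        pow_le_pow_left₀ (by norm_num) (by exact_mod_cast hq2) N
      exact Nat.succ_le_succ (Nat.le_floor (by linarith))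
    rw [← Finset.sum_subset (Finset.range_subset_range.mpr hNx)
      (fun n _ hn => if_neg (fun hc => hn (Finset.mem_range.mpr (Nat.lt_succ_of_le hc))))]
    exact Finset.sum_congr rfl fun n hn => if_pos (Nat.lt_succ_iff.mp (Finset.mem_range.mp hn))
  rw [main_sum]
  by_cases hL2 : 2 ≤ L
  · -- main case
    have hN2 : 2 ≤ N := Nat.le_floor (by exact_mod_cast hL2)
    have hN1 : 1 ≤ N := by omega
    have hNpos : (0:ℝ) < (N:ℝ) := by exact_mod_cast (by omega : 0 < N)
    have hNL : (N:ℝ) ≤ L := Nat.floor_le hL0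
    have hLN1 : L < (N:ℝ) + 1 := Nat.lt_floor_add_one L
    have hLpos : (0:ℝ) < L := by linarith
    have est := partial_est (F := F) N hN1
    have hlog1 : Real.log ((N:ℝ) + 1) - Real.log N ≤ 1 / N := by
      rw [← Real.log_div (by positivity) (by positivity)]
      have h := Real.log_le_sub_one_of_pos (show (0:ℝ) < ((N:ℝ)+1)/N by positivity)
      have heq : ((N:ℝ) + 1) / N - 1 = 1 / N := by field_simp; ring
      linarith
    have hlogNL : |Real.log N - Real.log L| ≤ 1 / N := by
      have h1 : Real.log N ≤ Real.log L := Real.log_le_log hNpos hNL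
      have h2 : Real.log L ≤ Real.log ((N:ℝ) + 1) := Real.log_le_log hLpos hLN1.le
      rw [abs_le]
      constructor <;> linarith
    have hloglog : Real.log L = Real.log (Real.log x) - Real.log lq :=
      Real.log_div (ne_of_gt hlx) (ne_of_gt hlq)
    -- 1/N ≤ 2 lq / log x
    have hIN : 1 / (N:ℝ) ≤ 2 * lq / Real.log x := by
      have h1 : 1 / (N:ℝ) ≤ 2 / L := by
        rw [div_le_div_iff₀ hNpos hLpos]
        nlinarith
      have h2 : 2 / L = 2 * lq / Real.log x := by
        rw [hLdef, div_div_eq_mul_div]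
      linarith
    -- rF^(N+1) ≤ 2 / log x
    have hrN : rF F ^ (N + 1) ≤ 2 / Real.log x := by
      have hr0 := rF_pos (F := F)
      have hstep1 : rF F ^ (N + 1) = rF F ^ ((N + 1 : ℕ) : ℝ) := (Real.rpow_natCast _ _).symm
      have hstep2 : rF F ^ ((N + 1 : ℕ) : ℝ) ≤ rF F ^ L := by
        apply Real.rpow_le_rpow_of_exponent_ge hr0 (rF_lt_one (F := F)).le
        push_cast
        linarith
      have hlogr : Real.log (rF F) = -(lq / 2) := by
        rw [rF_def, Real.log_inv, sF_def, Real.log_sqrt hq0.le]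
      have hstep3 : rF F ^ L = Real.exp (-(Real.log x / 2)) := by
        rw [Real.rpow_def_of_pos hr0, hlogr, hLdef]
        congr 1
        field_simp
      have hstep4 : Real.exp (-(Real.log x / 2)) = (Real.sqrt x)⁻¹ := by
        rw [Real.exp_neg]
        congr 1
        rw [Real.sqrt_eq_rpow, Real.rpow_def_of_pos hx0]
        ring_nf
      have hstep5 : (Real.sqrt x)⁻¹ ≤ 2 / Real.log x := by
        have hsx : 0 < Real.sqrt x := Real.sqrt_pos.mpr hx0
        have h1 : Real.log (Real.sqrt x) ≤ Real.sqrt x - 1 := Real.log_le_sub_one_of_pos hsx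
        have h2 : Real.log (Real.sqrt x) = Real.log x / 2 := Real.log_sqrt hx0.le
        rw [inv_eq_one_div, div_le_div_iff₀ hsx hlx]
        nlinarith
      calc rF F ^ (N + 1) = rF F ^ ((N + 1 : ℕ) : ℝ) := hstep1
        _ ≤ rF F ^ L := hstep2
        _ = Real.exp (-(Real.log x / 2)) := hstep3
        _ = (Real.sqrt x)⁻¹ := hstep4
        _ ≤ 2 / Real.log x := hstep5
    -- assemble
    have hsplit : ∑ n ∈ Finset.range (N + 1), (picount F n : ℝ) / (Fintype.card F : ℝ) ^ n
        - Real.log (Real.log x) - b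
        = (∑ n ∈ Finset.range (N + 1), (picount F n : ℝ) / (Fintype.card F : ℝ) ^ n
            - Real.log N - (Real.eulerMascheroniConstant + Econst F))
          + (Real.log N - Real.log L) := by
      rw [hloglog, hbdef]; ring
    rw [hsplit]
    have htri := abs_add_le (∑ n ∈ Finset.range (N + 1), (picount F n : ℝ) / (Fintype.card F : ℝ) ^ n
            - Real.log N - (Real.eulerMascheroniConstant + Econst F))
          (Real.log N - Real.log L)
    have hrpart : 2 * rF F ^ (N + 1) / (1 - rF F) ≤ (4 / (1 - rF F)) / Real.log x := by
      rw [div_le_div_iff₀ h1r (by positivity)]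
      have h4 : 2 * rF F ^ (N + 1) ≤ 4 / Real.log x := by
        have he : 4 / Real.log x = 2 * (2 / Real.log x) := by ring
        rw [he]
        linarith [hrN]
      have h5 : 0 < (4 / (1 - rF F)) * (1 - rF F) := by
        field_simp; norm_num
      calc 2 * rF F ^ (N + 1) * Real.log x ≤ (4 / Real.log x) * Real.log x := by
            exact mul_le_mul_of_nonneg_right h4 hlx.le
        _ = 4 := by field_simp
        _ = 4 / (1 - rF F) * (1 - rF F) := by field_simp
    have hfinal : 1 / (N:ℝ) + 2 * rF F ^ (N + 1) / (1 - rF F) + 1 / (N:ℝ) ≤ C / Real.log x := by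
      have hCsum : C / Real.log x = 2 * lq / Real.log x + (4 / (1 - rF F)) / Real.log x
          + 2 * lq / Real.log x + (M * (2 * lq)) / Real.log x := by
        rw [hCdef, hC1def]
        field_simp
        ring
      have hM2 : 0 ≤ M * (2 * lq) / Real.log x := by positivity
      rw [hCsum]
      linarith
    calc |(∑ n ∈ Finset.range (N + 1), (picount F n : ℝ) / (Fintype.card F : ℝ) ^ n
            - Real.log N - (Real.eulerMascheroniConstant + Econst F))
          + (Real.log N - Real.log L)|
        ≤ (1 / N + 2 * rF F ^ (N + 1) / (1 - rF F)) + 1 / N := by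
          refine le_trans htri (add_le_add est hlogNL)
      _ ≤ C / Real.log x := by linarith
  · -- small x case
    push_neg at hL2
    have hN1' : N ≤ 1 := by
      have : N < 2 := by
        rw [hNdef]
        exact (Nat.floor_lt hL0).mpr (by exact_mod_cast hL2)
      omega
    have hxlt : Real.log x < 2 * lq := by
      have := (div_lt_iff₀ hlq).mp (hLdef ▸ hL2)
      linarith
    set P : ℝ := ∑ n ∈ Finset.range (N + 1), (picount F n : ℝ) / (Fintype.card F : ℝ) ^ n with hPdef
    have hP0 : 0 ≤ P := Finset.sum_nonneg fun n _ => by positivity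
    have hP1 : P ≤ 1 := by
      interval_cases N
      · simp [hPdef, picount_zero]
      · rw [hPdef]
        rw [Finset.sum_range_succ, Finset.sum_range_one]
        rw [picount_zero]
        have h1 : (picount F 1 : ℝ) ≤ (Fintype.card F : ℝ) := by exact_mod_cast picount_one_le
        have : (picount F 1 : ℝ) / (Fintype.card F : ℝ) ^ 1 ≤ 1 := by
          rw [div_le_one (by positivity)]
          simpa using h1
        simpa using this
    have hlup : Real.log (Real.log x) ≤ Real.log (2 * lq) := Real.log_le_log hlx hxlt.le
    have hldown : Real.log (Real.log 2) ≤ Real.log (Real.log x) := by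
      refine Real.log_le_log (Real.log_pos (by norm_num)) ?_
      exact Real.log_le_log (by norm_num) hx
    have habs : |P - Real.log (Real.log x) - b| ≤ M := by
      have h1 : |Real.log (Real.log x)| ≤ |Real.log (2 * lq)| + |Real.log (Real.log 2)| := by
        rw [abs_le]
        constructor
        · have := neg_abs_le (Real.log (Real.log 2))
          have := abs_nonneg (Real.log (2 * lq))
          linarith
        · have := le_abs_self (Real.log (2 * lq))
          have := abs_nonneg (Real.log (Real.log 2))
          linarith
      have h2 : |P| ≤ 1 := abs_le.mpr ⟨by linarith, hP1⟩
      calc |P - Real.log (Real.log x) - b| ≤ |P - Real.log (Real.log x)| + |b| := abs_sub _ _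
        _ ≤ (|P| + |Real.log (Real.log x)|) + |b| :=
            add_le_add_left (abs_sub P (Real.log (Real.log x))) _
        _ ≤ M := by rw [hMdef]; linarith [h2, h1]
    have hMle : M ≤ C / Real.log x := by
      have h1 : M ≤ M * (2 * lq) / Real.log x := by
        rw [le_div_iff₀ hlx]
        have : M * Real.log x ≤ M * (2 * lq) := mul_le_mul_of_nonneg_left hxlt.le (by linarith)
        linarith
      have h2 : C / Real.log x = C₁ / Real.log x + M * (2 * lq) / Real.log x := by
        rw [hCdef, add_div]
      have h3 : 0 ≤ C₁ / Real.log x := by positivity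
      linarith
    linarith [habs, hMle, abs_nonneg (P - Real.log (Real.log x) - b)]


end GaoZhao
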